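/- (Equation (20)) For all n, k ∈ ℕ with k ≤ n, the fermionic p-adic q-integral of x ↦ B_{k,n}(x,q) exists and ∫_{ℤ_p} B_{k,n}(x,q) dμ_{−q}(x) = C(n,k)·Σ_{l=0}^{k} C(k,l)·(−1)^{k+l}·ξ_{n−l,1/q}(2), where ξ_{m,1/q} denotes the q-Euler polynomial with parameter 1/q in place of q. -/

import Mathlib

open Finset Filter

/-- `[a]_q = (1 - q^a)/(1 - q)` for `a : ℤ`. -/
noncomputable def qnum {p : ℕ} [Fact p.Prime] (q : ℚ_[p]) (a : ℤ) : ℚ_[p] :=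
  (1 - q ^ a) / (1 - q)

/-- Kim's q-Euler polynomial `ξ_{n,q}(x)` (closed form). -/
noncomputable def xi {p : ℕ} [Fact p.Prime] (q : ℚ_[p]) (n : ℕ) (x : ℤ) : ℚ_[p] :=
  ((1 + q) / (1 - q) ^ n) *
    ∑ l ∈ Finset.range (n + 1),
      (n.choose l : ℚ_[p]) * (-1) ^ l * q ^ ((l : ℤ) * x) / (1 + q ^ (l + 1))

/-- The fermionic p-adic `r`-integral statement:
`∫_{ℤ_p} g dμ_{-r} = L` means the Riemann-type sums
`(1/[p^N]_{-r}) · Σ_{x=0}^{p^N-1} g(x) (-r)^x` converge to `L`. -/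
def fermionicIntegral (p : ℕ) [Fact p.Prime] (r : ℚ_[p]) (g : ℕ → ℚ_[p]) (L : ℚ_[p]) : Prop :=
  Filter.Tendsto
    (fun N : ℕ => ((1 + r) / (1 - (-r) ^ (p ^ N))) * ∑ x ∈ Finset.range (p ^ N), g x * (-r) ^ x)
    Filter.atTop (nhds L)

/-- The q-Bernstein polynomial `B_{k,n}(x,q) = C(n,k) [x]_q^k [1-x]_{1/q}^{n-k}`. -/
noncomputable def bern {p : ℕ} [Fact p.Prime] (q : ℚ_[p]) (k n : ℕ) (x : ℤ) : ℚ_[p] :=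
  (n.choose k : ℚ_[p]) * (qnum q x) ^ k * (qnum q⁻¹ (1 - x)) ^ (n - k)

section Aux

variable {p : ℕ} [Fact p.Prime]

lemma aux_norm_two (hp : Odd p) : ‖(2 : ℚ_[p])‖ = 1 := by
  have hpp := (Fact.out : p.Prime)
  have h2 : ¬ ((p:ℤ) ∣ 2) := by
    intro h
    have hp2 : p ∣ 2 := Int.ofNat_dvd.mp (by exact_mod_cast h)
    have := (Nat.prime_dvd_prime_iff_eq hpp Nat.prime_two).mp hp2
    simp [this, Nat.odd_iff] at hp
  have := (Padic.norm_intCast_lt_one_iff (p := p) (k := 2)).not.mpr h2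
  have hle := Padic.norm_int_le_one (p := p) 2
  push_cast at this hle
  linarith [lt_or_ge (‖(2:ℚ_[p])‖) 1]

lemma aux_norm_q_one (q : ℚ_[p]) (hq : ‖q - 1‖ < 1) : ‖q‖ = 1 := by
  have h : ‖q - 1‖ ≠ ‖(1:ℚ_[p])‖ := by simp; nlinarith [norm_nonneg (q-1)]
  have := Padic.add_eq_max_of_ne (p := p) (q := q - 1) (r := 1) (by simpa using h)
  simp at this; rw [this]; simp; linarith

lemma aux_norm_pow_sub_one (q : ℚ_[p]) (hq : ‖q - 1‖ < 1) (m : ℕ) : ‖q ^ m - 1‖ ≤ ‖q - 1‖ := by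
  induction m with
  | zero => simp
  | succ m ih =>
    have h : q ^ (m+1) - 1 = q ^ m * (q - 1) + (q ^ m - 1) := by ring
    rw [h]
    refine (Padic.nonarchimedean _ _).trans (max_le ?_ ih)
    rw [norm_mul]
    calc ‖q^m‖ * ‖q-1‖ ≤ 1 * ‖q-1‖ := by
          apply mul_le_mul_of_nonneg_right _ (norm_nonneg _)
          simp [aux_norm_q_one q hq]
      _ = ‖q-1‖ := one_mul _

lemma aux_norm_one_add_pow (hp : Odd p) (q : ℚ_[p]) (hq : ‖q - 1‖ < 1) (m : ℕ) :
    ‖1 + q ^ m‖ = 1 := by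
  have h : (1 : ℚ_[p]) + q ^ m = 2 + (q ^ m - 1) := by ring
  have hlt : ‖q ^ m - 1‖ < 1 := (aux_norm_pow_sub_one q hq m).trans_lt hq
  have hne : ‖(2:ℚ_[p])‖ ≠ ‖q ^ m - 1‖ := by
    rw [aux_norm_two hp]; exact fun h' => absurd (h' ▸ hlt) (lt_irrefl _)
  rw [h, Padic.add_eq_max_of_ne hne, aux_norm_two hp]
  exact max_eq_left (by rw [← aux_norm_two hp]; exact hlt.le.trans (by rw [aux_norm_two hp]))

lemma aux_one_add_pow_ne (hp : Odd p) (q : ℚ_[p]) (hq : ‖q - 1‖ < 1) (m : ℕ) :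
    1 + q ^ m ≠ 0 := by
  intro h0
  have := aux_norm_one_add_pow hp q hq m
  rw [h0] at this; simp at this

lemma aux_pow_p_step (y : ℚ_[p]) (hy : ‖y - 1‖ < 1) :
    ‖y ^ p - 1‖ ≤ max (p : ℝ)⁻¹ ‖y - 1‖ * ‖y - 1‖ := by
  have hgeom : y ^ p - 1 = (∑ i ∈ range p, y ^ i) * (y - 1) := (geom_sum_mul y p).symm
  have hS : (∑ i ∈ range p, y ^ i) = (p : ℚ_[p]) + ∑ i ∈ range p, (y ^ i - 1) := by
    rw [Finset.sum_sub_distrib]; simp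
  have hbound : ‖∑ i ∈ range p, y ^ i‖ ≤ max (p : ℝ)⁻¹ ‖y - 1‖ := by
    rw [hS]
    refine (Padic.nonarchimedean _ _).trans (max_le_max ?_ ?_)
    · rw [Padic.norm_p]
    · exact IsUltrametricDist.norm_sum_le_of_forall_le_of_nonneg (norm_nonneg _)
        (fun i _ => aux_norm_pow_sub_one y hy i)
  rw [hgeom, norm_mul]
  exact mul_le_mul_of_nonneg_right hbound (norm_nonneg _)

lemma aux_tendsto_q_pow_pow (q : ℚ_[p]) (hq : ‖q - 1‖ < 1) :
    Tendsto (fun N : ℕ => q ^ (p ^ N)) atTop (nhds 1) := by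
  have hpp := (Fact.out : p.Prime)
  set c : ℝ := max (p : ℝ)⁻¹ ‖q - 1‖ with hc
  have hc0 : 0 ≤ c := le_max_of_le_left (by positivity)
  have hc1 : c < 1 := max_lt (by
    rw [inv_lt_one_iff₀]; right; exact_mod_cast hpp.one_lt) hq
  have hcq : ‖q - 1‖ ≤ c := le_max_right _ _
  have bound : ∀ N : ℕ, ‖q ^ (p ^ N) - 1‖ ≤ c ^ N * ‖q - 1‖ := by
    intro N
    induction N with
    | zero => simp
    | succ N ih =>
      have hle : ‖q ^ (p ^ N) - 1‖ ≤ ‖q - 1‖ := ih.trans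
        (mul_le_of_le_one_left (norm_nonneg _) (pow_le_one₀ hc0 hc1.le))
      have hy : ‖q ^ (p ^ N) - 1‖ < 1 := hle.trans_lt hq
      have hstep := aux_pow_p_step (q ^ (p ^ N)) hy
      have heq : q ^ (p ^ (N+1)) = (q ^ (p ^ N)) ^ p := by
        rw [← pow_mul, pow_succ]
      rw [heq]
      refine hstep.trans ?_
      have hmaxle : max (p:ℝ)⁻¹ ‖q ^ (p ^ N) - 1‖ ≤ c :=
        max_le (le_max_left _ _) (hle.trans hcq)
      calc max (p:ℝ)⁻¹ ‖q ^ (p ^ N) - 1‖ * ‖q ^ (p ^ N) - 1‖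
          ≤ c * (c ^ N * ‖q - 1‖) :=
            mul_le_mul hmaxle ih (norm_nonneg _) hc0
        _ = c ^ (N+1) * ‖q - 1‖ := by ring
  have h0 : Tendsto (fun N : ℕ => ‖q ^ (p ^ N) - 1‖) atTop (nhds 0) := by
    have hz : Tendsto (fun N : ℕ => c ^ N * ‖q - 1‖) atTop (nhds 0) := by
      simpa using (tendsto_pow_atTop_nhds_zero_of_lt_one hc0 hc1).mul_const ‖q - 1‖
    exact squeeze_zero (fun N => norm_nonneg _) bound hz
  rw [tendsto_iff_norm_sub_tendsto_zero]
  exact h0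

lemma aux_ferm_geom (hp : Odd p) (q : ℚ_[p]) (hq : ‖q - 1‖ < 1) (a : ℕ) :
    fermionicIntegral p q (fun x => q ^ (a * x)) ((1 + q) / (1 + q ^ (a + 1))) := by
  have hden : 1 + q ^ (a + 1) ≠ 0 := aux_one_add_pow_ne hp q hq (a + 1)
  have hden' : q ^ (a + 1) + 1 ≠ 0 := by rw [add_comm]; exact hden
  have hodd : ∀ N : ℕ, Odd (p ^ N) := fun N => hp.pow
  have hr1 : -(q ^ (a + 1)) ≠ 1 := by
    intro h
    apply hden
    have h2 : q ^ (a+1) = -1 := by linear_combination -h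
    rw [h2]; ring
  have key : ∀ N : ℕ,
      ((1 + q) / (1 - (-q) ^ (p ^ N))) * ∑ x ∈ range (p ^ N), q ^ (a * x) * (-q) ^ x
      = (1 + q) / (1 + q ^ (p ^ N)) * (((q ^ (p ^ N)) ^ (a + 1) + 1) / (q ^ (a + 1) + 1)) := by
    intro N
    have h1 : ∑ x ∈ range (p ^ N), q ^ (a * x) * (-q) ^ x
        = ∑ x ∈ range (p ^ N), (-(q ^ (a + 1))) ^ x := by
      refine Finset.sum_congr rfl fun x _ => ?_
      have hax : a * x + x = (a + 1) * x := by ring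
      calc q ^ (a*x) * (-q)^x = q ^ (a*x) * ((-1)^x * q^x) := by rw [neg_pow]
        _ = (-1)^x * q^(a*x + x) := by rw [pow_add]; ring
        _ = (-1)^x * (q^(a+1))^x := by rw [hax, pow_mul]
        _ = (-(q ^ (a + 1))) ^ x := (neg_pow _ _).symm
    rw [h1, geom_sum_eq hr1, (hodd N).neg_pow, (hodd N).neg_pow]
    rw [show ((q ^ (a+1)) ^ (p ^ N)) = ((q ^ (p ^ N)) ^ (a+1)) by
      rw [← pow_mul, mul_comm, pow_mul]]
    rw [show (1 : ℚ_[p]) - -q ^ (p ^ N) = 1 + q ^ (p ^ N) by ring]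
    rw [show -(q ^ (p ^ N)) ^ (a+1) - 1 = -(((q ^ (p ^ N)) ^ (a+1)) + 1) by ring,
        show -q ^ (a+1) - 1 = -((q ^ (a+1)) + 1) by ring, neg_div_neg_eq]
  unfold fermionicIntegral
  rw [show ((1 + q) / (1 + q ^ (a + 1))) = (1+q)/(1+1) * (((1:ℚ_[p]) ^ (a+1) + 1)/(q ^ (a+1) + 1)) by
    rw [one_pow, add_comm (q ^ (a+1)) 1]; field_simp]
  refine Tendsto.congr (fun N => (key N).symm) ?_
  have hcont : Tendsto (fun y : ℚ_[p] => (1 + q) / (1 + y) * ((y ^ (a + 1) + 1) / (q ^ (a + 1) + 1)))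
      (nhds 1) (nhds ((1+q)/(1+1) * (((1:ℚ_[p]) ^ (a+1) + 1)/(q ^ (a+1) + 1)))) := by
    apply ContinuousAt.tendsto
    apply ContinuousAt.mul
    · exact ContinuousAt.div continuousAt_const (by fun_prop) (by norm_num)
    · exact ContinuousAt.div (by fun_prop) continuousAt_const hden'
  exact hcont.comp (aux_tendsto_q_pow_pow q hq)

lemma aux_ferm_sum (q : ℚ_[p]) {ι : Type*} (s : Finset ι) (c : ι → ℚ_[p]) (g : ι → ℕ → ℚ_[p])
    (L : ι → ℚ_[p]) (h : ∀ i ∈ s, fermionicIntegral p q (g i) (L i)) :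
    fermionicIntegral p q (fun x => ∑ i ∈ s, c i * g i x) (∑ i ∈ s, c i * L i) := by
  unfold fermionicIntegral at *
  have key : ∀ N : ℕ,
      ((1 + q) / (1 - (-q) ^ (p ^ N))) * ∑ x ∈ range (p ^ N), (∑ i ∈ s, c i * g i x) * (-q) ^ x
      = ∑ i ∈ s, c i * (((1 + q) / (1 - (-q) ^ (p ^ N))) * ∑ x ∈ range (p ^ N), g i x * (-q) ^ x) := by
    intro N
    simp only [Finset.sum_mul, Finset.mul_sum]
    rw [Finset.sum_comm]
    exact Finset.sum_congr rfl fun i _ => Finset.sum_congr rfl fun x _ => by ring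
  exact Tendsto.congr (fun N => (key N).symm)
    (tendsto_finset_sum s fun i hi => (h i hi).const_mul (c i))

lemma aux_qnum_symm (q : ℚ_[p]) (hq0 : q ≠ 0) (hq1 : q ≠ 1) (x : ℤ) :
    qnum q x = 1 - qnum q⁻¹ (1 - x) := by
  have h1q : (1 : ℚ_[p]) - q ≠ 0 := fun h => hq1 (sub_eq_zero.mp h).symm
  have h2 : (q⁻¹ : ℚ_[p]) ^ (1 - x) = q⁻¹ * q ^ x := by
    rw [inv_zpow', neg_sub, zpow_sub₀ hq0, zpow_one]
    field_simp
  have h1q' : (1 : ℚ_[p]) - q⁻¹ ≠ 0 := by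
    rw [show (1:ℚ_[p]) - q⁻¹ = (q - 1) / q by field_simp]
    exact div_ne_zero (fun h => hq1 (sub_eq_zero.mp h)) hq0
  unfold qnum
  have hq1' : q - 1 ≠ 0 := fun h => hq1 (sub_eq_zero.mp h)
  have h3 : (1:ℚ_[p]) - q⁻¹ = (q - 1)/q := by field_simp
  rw [h2, h3, div_div_eq_mul_div,
    show (1 - q⁻¹ * q ^ x) * q = q - q ^ x by field_simp]
  rw [eq_sub_iff_add_eq, div_add_div _ _ h1q hq1', div_eq_one_iff_eq (mul_ne_zero h1q hq1')]
  ring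

lemma aux_qnum_inv_pow (q : ℚ_[p]) (hq0 : q ≠ 0) (m x : ℕ) :
    (qnum q⁻¹ (1 - (x:ℤ))) ^ m
      = ∑ l ∈ range (m + 1),
          ((m.choose l : ℚ_[p]) * (-1) ^ l * q⁻¹ ^ l / (1 - q⁻¹) ^ m) * q ^ (l * x) := by
  have h2 : (q⁻¹ : ℚ_[p]) ^ (1 - (x:ℤ)) = q⁻¹ * q ^ (x:ℕ) := by
    rw [inv_zpow', neg_sub, zpow_sub₀ hq0, zpow_one]
    rw [zpow_natCast]
    field_simp
  unfold qnum
  rw [h2, div_pow]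
  rw [show (1 : ℚ_[p]) - q⁻¹ * q ^ x = (-(q⁻¹ * q ^ x)) + 1 by ring, add_pow]
  rw [Finset.sum_div]
  refine Finset.sum_congr rfl fun l hl => ?_
  rw [neg_pow, mul_pow, one_pow, ← pow_mul, mul_comm x l]
  rw [div_mul_eq_mul_div]
  ring_nf

lemma aux_ferm_qnum_pow (hp : Odd p) (q : ℚ_[p]) (hq : ‖q - 1‖ < 1) (hq1 : q ≠ 1) (m : ℕ) :
    fermionicIntegral p q (fun x => (qnum q⁻¹ (1 - (x:ℤ))) ^ m) (xi q⁻¹ m 2) := by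
  have hq0 : q ≠ 0 := fun h => by
    have := aux_norm_q_one q hq; rw [h] at this; simp at this
  have hqi : ‖q⁻¹ - 1‖ < 1 := by
    have h : q⁻¹ - 1 = -(q - 1) * q⁻¹ := by field_simp; ring
    rw [h, norm_mul, norm_neg, norm_inv, aux_norm_q_one q hq]
    simpa using hq
  have h1q' : (1 : ℚ_[p]) - q⁻¹ ≠ 0 := by
    intro h
    exact hq1 (by rw [← inv_inv q, (sub_eq_zero.mp h).symm]; simp)
  have hfun : (fun x : ℕ => (qnum q⁻¹ (1 - (x:ℤ))) ^ m)
      = fun x : ℕ => ∑ l ∈ range (m + 1),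
          ((m.choose l : ℚ_[p]) * (-1) ^ l * q⁻¹ ^ l / (1 - q⁻¹) ^ m) * q ^ (l * x) :=
    funext fun x => aux_qnum_inv_pow q hq0 m x
  rw [hfun]
  have hsum := aux_ferm_sum q (range (m + 1))
      (fun l => (m.choose l : ℚ_[p]) * (-1) ^ l * q⁻¹ ^ l / (1 - q⁻¹) ^ m)
      (fun l x => q ^ (l * x)) (fun l => (1 + q) / (1 + q ^ (l + 1)))
      (fun l _ => aux_ferm_geom hp q hq l)
  have hval : xi q⁻¹ m 2
      = ∑ l ∈ range (m + 1),
          ((m.choose l : ℚ_[p]) * (-1) ^ l * q⁻¹ ^ l / (1 - q⁻¹) ^ m) * ((1 + q) / (1 + q ^ (l + 1))) := by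
    rw [xi, Finset.mul_sum]
    refine Finset.sum_congr rfl fun l _ => ?_
    have hz : (q⁻¹ : ℚ_[p]) ^ ((l : ℤ) * 2) = q⁻¹ ^ (2 * l) := by
      rw [show ((l : ℤ) * 2) = ((2 * l : ℕ) : ℤ) by push_cast; ring, zpow_natCast]
    rw [hz]
    have hd1 : (1 : ℚ_[p]) + q ^ (l + 1) ≠ 0 := aux_one_add_pow_ne hp q hq (l + 1)
    have hqm1 : q - 1 ≠ 0 := sub_ne_zero.mpr hq1
    have e1 : (1:ℚ_[p]) + q⁻¹ = (1 + q)/q := by field_simp; ring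
    have e2 : (1:ℚ_[p]) - q⁻¹ = (q - 1)/q := by field_simp
    have e4 : (1:ℚ_[p]) + q⁻¹ ^ (l + 1) = (1 + q ^ (l + 1))/q ^ (l + 1) := by
      rw [inv_pow]; field_simp; ring
    rw [e1, e2, e4, inv_pow, inv_pow, div_pow]
    field_simp
    ring
  rw [hval]
  exact hsum

lemma aux_bern_expand (q : ℚ_[p]) (hq0 : q ≠ 0) (hq1 : q ≠ 1) (n k : ℕ) (hkn : k ≤ n) (x : ℤ) :
    bern q k n x = ∑ l ∈ range (k + 1),
      ((n.choose k : ℚ_[p]) * (k.choose l) * (-1) ^ (k + l)) * (qnum q⁻¹ (1 - x)) ^ (n - l) := by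
  have h1 : qnum q x = 1 - qnum q⁻¹ (1 - x) := aux_qnum_symm q hq0 hq1 x
  set v : ℚ_[p] := qnum q⁻¹ (1 - x) with hv
  rw [bern, h1, ← hv]
  rw [show ((1:ℚ_[p]) - v) = (-v) + 1 by ring, add_pow]
  simp only [one_pow, mul_one]
  rw [Finset.mul_sum, Finset.sum_mul]
  rw [← Finset.sum_range_reflect
    (fun l => ((n.choose k : ℚ_[p]) * (k.choose l) * (-1) ^ (k + l)) * v ^ (n - l)) (k + 1)]
  refine Finset.sum_congr rfl fun i hi => ?_
  have hik : i ≤ k := Nat.lt_succ_iff.mp (mem_range.mp hi)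
  have e1 : k + 1 - 1 - i = k - i := by omega
  have e2 : n - (k - i) = (n - k) + i := by omega
  have e3 : ((k.choose (k - i) : ℚ_[p])) = k.choose i := by rw [Nat.choose_symm hik]
  have e4 : ((-1 : ℚ_[p])) ^ (k + (k - i)) = (-1) ^ i := by
    rw [show k + (k - i) = 2 * (k - i) + i by omega, pow_add, pow_mul]
    norm_num
  simp only [e1, e2, e3, e4]
  rw [neg_pow, pow_add]
  ring

end Aux

theorem stmt13 (p : ℕ) [Fact p.Prime] (hp : Odd p) (q : ℚ_[p]) (hq : ‖1 - q‖ < 1) (hq1 : q ≠ 1) (n k : ℕ) (hkn : k ≤ n) :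
    fermionicIntegral p q (fun x => bern q k n x)
      ((n.choose k : ℚ_[p]) *
        ∑ l ∈ Finset.range (k + 1), (k.choose l : ℚ_[p]) * (-1) ^ (k + l) * xi q⁻¹ (n - l) 2) := by
  have hq' : ‖q - 1‖ < 1 := by rwa [norm_sub_rev] at hq
  have hq0 : q ≠ 0 := fun h => by
    have := aux_norm_q_one q hq'; rw [h] at this; simp at this
  have hfun : (fun x : ℕ => bern q k n (x:ℤ))
      = fun x : ℕ => ∑ l ∈ range (k + 1),
          ((n.choose k : ℚ_[p]) * (k.choose l) * (-1) ^ (k + l)) * (qnum q⁻¹ (1 - (x:ℤ))) ^ (n - l) :=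
    funext fun x => aux_bern_expand q hq0 hq1 n k hkn x
  rw [hfun]
  have hval : ((n.choose k : ℚ_[p]) *
        ∑ l ∈ Finset.range (k + 1), (k.choose l : ℚ_[p]) * (-1) ^ (k + l) * xi q⁻¹ (n - l) 2)
      = ∑ l ∈ range (k + 1),
          ((n.choose k : ℚ_[p]) * (k.choose l) * (-1) ^ (k + l)) * xi q⁻¹ (n - l) 2 := by
    rw [Finset.mul_sum]
    exact Finset.sum_congr rfl fun l _ => by ring
  rw [hval]
  exact aux_ferm_sum q (range (k + 1))
    (fun l => (n.choose k : ℚ_[p]) * (k.choose l) * (-1) ^ (k + l))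
    (fun l x => (qnum q⁻¹ (1 - (x:ℤ))) ^ (n - l))
    (fun l => xi q⁻¹ (n - l) 2)
    (fun l _ => aux_ferm_qnum_pow hp q hq' hq1 (n - l))
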